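/- Fix L ∈ ℕ and τ ∈ Ω. If z ∈ Z_{L,τ}(𝓗), x ∈ W̃ ∖ Λ, and ℓ(x) = L, then z_x = 0. -/

import Mathlib

section

variable {B W Ω : Type*} [Group W] [Group Ω] {M : CoxeterMatrix B}

/-- The length function on `W̃ = W ⋊ Ω`, extending the Coxeter length of `(W, S)` by
`ℓ(wτ) = ℓ(w)`. -/
noncomputable def extLen (cs : CoxeterSystem M W) {φ : Ω →* MulAut W}
    (x : W ⋊[φ] Ω) : ℕ := cs.length x.left

/-- `x ∈ W̃` is a simple reflection, i.e. an element of `S` viewed inside `W̃`. -/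
def IsSimpleElt (cs : CoxeterSystem M W) {φ : Ω →* MulAut W} (x : W ⋊[φ] Ω) : Prop :=
  ∃ i : B, x = SemidirectProduct.inl (cs.simple i)

/-- The sequence of iterated conjugates `x, s₁xs₁, s₂s₁xs₁s₂, …`. -/
def conjSeqW {φ : Ω →* MulAut W} (x : W ⋊[φ] Ω) (ss : ℕ → W ⋊[φ] Ω) : ℕ → W ⋊[φ] Ω
  | 0 => x
  | n + 1 => ss n * conjSeqW x ss n * ss n

/-- `x` and `x′` are laterally conjugate: `x′` is obtained from `x` by a sequence of
length-preserving conjugations by simple reflections. -/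
noncomputable def LaterallyConj (cs : CoxeterSystem M W) {φ : Ω →* MulAut W}
    (x x' : W ⋊[φ] Ω) : Prop :=
  ∃ (n : ℕ) (ss : ℕ → W ⋊[φ] Ω), (∀ i < n, IsSimpleElt cs (ss i)) ∧
    (∀ i < n, extLen cs (conjSeqW x ss (i + 1)) = extLen cs x) ∧ x' = conjSeqW x ss n

/-- `x` has the Direct Diamond Property. -/
noncomputable def DirectDiamond (cs : CoxeterSystem M W) {φ : Ω →* MulAut W}
    (x : W ⋊[φ] Ω) : Prop :=
  ∃ s : W ⋊[φ] Ω, IsSimpleElt cs s ∧ extLen cs x < extLen cs (s * x) ∧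
    extLen cs x < extLen cs (x * s) ∧ s * x * s ≠ x

/-- `x` has the Diamond Property: it is laterally conjugate to an element with the
Direct Diamond Property. -/
noncomputable def Diamond (cs : CoxeterSystem M W) {φ : Ω →* MulAut W}
    (x : W ⋊[φ] Ω) : Prop :=
  ∃ x' : W ⋊[φ] Ω, LaterallyConj cs x x' ∧ DirectDiamond cs x'

end


/-- The set of `W₀`-conjugacy classes of elements of `Λ`. -/
def latClasses {W Ω : Type*} [Group W] [Group Ω] {φ : Ω →* MulAut W}
    (Λ W₀ : Subgroup (W ⋊[φ] Ω)) : Set (Set (W ⋊[φ] Ω)) :=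
  {O | ∃ t ∈ Λ, O = {x | ∃ u ∈ W₀, x = u * t * u⁻¹}}


namespace Stmt15Aux

open CoxeterSystem List
open scoped Classical

section GroupAux

variable {G : Type*} [Group G] {a b : G}

lemma self_inv (ha : a * a = 1) : a⁻¹ = a := by
  rw [← mul_one a⁻¹, ← ha, ← mul_assoc, inv_mul_cancel, one_mul]

lemma conj_self_iff (ha : a * a = 1) (w : G) : a * w * a = a ↔ w = a := by
  constructor
  · intro h
    have h0 : w = a⁻¹ * (a * w * a) * a⁻¹ := by group
    rw [h, self_inv ha] at h0
    rw [h0, ha, one_mul]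
  · intro h; rw [h, ha, one_mul]

lemma conj_eq_iff (ha : a * a = 1) (hb : b * b = 1) (w : G) :
    b * w * b = a ↔ w = (b * a) ^ 1 * b := by
  rw [pow_one]
  constructor
  · intro h
    have h0 : w = b⁻¹ * (b * w * b) * b⁻¹ := by group
    rw [h, self_inv hb] at h0
    rw [h0]
  · intro h
    rw [h]
    calc b * (b * a * b) * b = (b * b) * a * (b * b) := by simp only [mul_assoc]
    _ = a := by rw [hb]; simp

lemma conj_pow_eq_iff (ha : a * a = 1) (hb : b * b = 1) (r : ℕ) (w : G) :
    (a * b) * w * (a * b)⁻¹ = (b * a) ^ r * b ↔ w = (b * a) ^ (r + 2) * b := by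
  have key : (a * b)⁻¹ * ((b * a) ^ r * b) * (a * b) = (b * a) ^ (r + 2) * b := by
    calc (a * b)⁻¹ * ((b * a) ^ r * b) * (a * b)
        = (b * a) * ((b * a) ^ r * b) * (a * b) := by
          rw [mul_inv_rev, self_inv ha, self_inv hb]
      _ = ((b * a) * (b * a) ^ r) * ((b * a) * b) := by simp only [mul_assoc]
      _ = (b * a) ^ (r + 1) * ((b * a) * b) := by rw [← pow_succ']
      _ = ((b * a) ^ (r + 1) * (b * a)) * b := by simp only [mul_assoc]
      _ = (b * a) ^ (r + 2) * b := by rw [← pow_succ]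
  constructor
  · intro h
    have h0 : w = (a * b)⁻¹ * ((a * b) * w * (a * b)⁻¹) * (a * b) := by group
    rw [h, key] at h0
    exact h0
  · intro h
    rw [h, ← key]
    group

end GroupAux

variable {B : Type*} {W : Type*} [Group W] {M : CoxeterMatrix B} (cs : CoxeterSystem M W)

local prefix:100 "σ" => cs.simple
local prefix:100 "ℓ" => cs.length
local prefix:100 "π" => cs.wordProd

/-- The Bourbaki sign involution. -/
noncomputable def eta (i : B) : Equiv.Perm (W × ℤˣ) :=
  Function.Involutive.toPerm
    (fun p => (σ i * p.1 * σ i, if p.1 = σ i then -p.2 else p.2))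
    (by
      intro p
      have ha := cs.simple_mul_simple_self i
      refine Prod.ext ?_ ?_
      · show σ i * (σ i * p.1 * σ i) * σ i = p.1
        calc σ i * (σ i * p.1 * σ i) * σ i = (σ i * σ i) * p.1 * (σ i * σ i) := by
              simp only [mul_assoc]
        _ = p.1 := by rw [ha]; simp
      · show (if (σ i * p.1 * σ i) = σ i then
            -(if p.1 = σ i then -p.2 else p.2) else (if p.1 = σ i then -p.2 else p.2)) = p.2
        by_cases hp : p.1 = σ i
        · rw [if_pos hp, if_pos ((conj_self_iff ha p.1).mpr hp), neg_neg]
        · rw [if_neg hp, if_neg (fun hc => hp ((conj_self_iff ha p.1).mp hc))])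

lemma eta_apply (i : B) (w : W) (ε : ℤˣ) :
    eta cs i (w, ε) = (σ i * w * σ i, if w = σ i then -ε else ε) := rfl

lemma eta_pow_apply (i j : B) (k : ℕ) (w : W) (ε : ℤˣ) :
    ((eta cs i * eta cs j) ^ k) (w, ε) =
      ((σ i * σ j) ^ k * w * ((σ i * σ j) ^ k)⁻¹,
        (∏ r ∈ Finset.range (2 * k),
          (if w = (σ j * σ i) ^ r * σ j then (-1 : ℤˣ) else 1)) * ε) := by
  have ha := cs.simple_mul_simple_self i
  have hb := cs.simple_mul_simple_self j
  induction k generalizing w ε with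
  | zero => simp
  | succ k ih =>
    have h1 : ((eta cs i * eta cs j) ^ (k + 1)) (w, ε)
        = ((eta cs i * eta cs j) ^ k) ((eta cs i * eta cs j) (w, ε)) := by
      rw [pow_succ, Equiv.Perm.mul_apply]
    have hc1 : (σ j * w * σ j = σ i) ↔ (w = (σ j * σ i) ^ 1 * σ j) :=
      conj_eq_iff ha hb w
    have hc0 : (w = σ j) ↔ (w = (σ j * σ i) ^ 0 * σ j) := by rw [pow_zero, one_mul]
    have hstep : (eta cs i * eta cs j) (w, ε) =
        ((σ i * σ j) * w * (σ i * σ j)⁻¹,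
          ((if w = (σ j * σ i) ^ 0 * σ j then (-1 : ℤˣ) else 1) *
            (if w = (σ j * σ i) ^ 1 * σ j then (-1 : ℤˣ) else 1)) * ε) := by
      rw [Equiv.Perm.mul_apply, eta_apply, eta_apply]
      refine Prod.ext ?_ ?_
      · show σ i * (σ j * w * σ j) * σ i = (σ i * σ j) * w * (σ i * σ j)⁻¹
        rw [mul_inv_rev, self_inv ha, self_inv hb]
        simp only [mul_assoc]
      · show (if (σ j * w * σ j) = σ i then
            -(if w = σ j then -ε else ε) else (if w = σ j then -ε else ε)) = _
        by_cases h0 : w = σ j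
        · rw [if_pos h0, if_pos (hc0.mp h0)]
          by_cases h1' : σ j * w * σ j = σ i
          · rw [if_pos h1', if_pos (hc1.mp h1'), neg_neg]; simp
          · rw [if_neg h1', if_neg (fun hh => h1' (hc1.mpr hh))]; simp
        · rw [if_neg h0, if_neg (fun hh => h0 (hc0.mpr hh))]
          by_cases h1' : σ j * w * σ j = σ i
          · rw [if_pos h1', if_pos (hc1.mp h1')]; simp
          · rw [if_neg h1', if_neg (fun hh => h1' (hc1.mpr hh))]; simp
    rw [h1, hstep, ih]
    refine Prod.ext ?_ ?_
    · show (σ i * σ j) ^ k * ((σ i * σ j) * w * (σ i * σ j)⁻¹) * ((σ i * σ j) ^ k)⁻¹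
        = (σ i * σ j) ^ (k + 1) * w * ((σ i * σ j) ^ (k + 1))⁻¹
      generalize (σ i * σ j) = p
      group
    · show (∏ r ∈ Finset.range (2 * k),
          (if (σ i * σ j) * w * (σ i * σ j)⁻¹ = (σ j * σ i) ^ r * σ j then (-1 : ℤˣ) else 1)) *
            (((if w = (σ j * σ i) ^ 0 * σ j then (-1 : ℤˣ) else 1) *
              (if w = (σ j * σ i) ^ 1 * σ j then (-1 : ℤˣ) else 1)) * ε) = _
      have hterm : ∀ r ∈ Finset.range (2 * k),
          (if (σ i * σ j) * w * (σ i * σ j)⁻¹ = (σ j * σ i) ^ r * σ j then (-1 : ℤˣ) else 1)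
            = (if w = (σ j * σ i) ^ (r + 2) * σ j then (-1 : ℤˣ) else 1) := by
        intro r _
        by_cases h : w = (σ j * σ i) ^ (r + 2) * σ j
        · rw [if_pos ((conj_pow_eq_iff ha hb r w).mpr h), if_pos h]
        · rw [if_neg (fun hh => h ((conj_pow_eq_iff ha hb r w).mp hh)), if_neg h]
      have hsplit : (∏ r ∈ Finset.range (2 * (k + 1)),
            (if w = (σ j * σ i) ^ r * σ j then (-1 : ℤˣ) else 1))
          = ((if w = (σ j * σ i) ^ 0 * σ j then (-1 : ℤˣ) else 1) *
              (if w = (σ j * σ i) ^ 1 * σ j then (-1 : ℤˣ) else 1)) *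
            (∏ r ∈ Finset.range (2 * k),
              (if w = (σ j * σ i) ^ (r + 2) * σ j then (-1 : ℤˣ) else 1)) := by
        have h2 : 2 * (k + 1) = 2 + 2 * k := by ring
        rw [h2, Finset.prod_range_add]
        congr 1
        · rw [Finset.prod_range_succ, Finset.prod_range_one]
        · exact Finset.prod_congr rfl (fun r _ => by rw [Nat.add_comm 2 r])
      rw [Finset.prod_congr rfl hterm, hsplit, ← mul_assoc,
        mul_comm (∏ r ∈ Finset.range (2 * k),
          (if w = (σ j * σ i) ^ (r + 2) * σ j then (-1 : ℤˣ) else 1))]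


lemma eta_liftable : M.IsLiftable (fun i => eta cs i) := by
  intro i j
  apply Equiv.ext
  rintro ⟨w, ε⟩
  rw [Equiv.Perm.coe_one, id_eq, eta_pow_apply]
  have hp : (σ i * σ j) ^ M.M i j = 1 := cs.simple_mul_simple_pow i j
  have hq : (σ j * σ i) ^ M.M i j = 1 := cs.simple_mul_simple_pow' i j
  refine Prod.ext ?_ ?_
  · show (σ i * σ j) ^ M.M i j * w * ((σ i * σ j) ^ M.M i j)⁻¹ = w
    rw [hp]; simp
  · show (∏ r ∈ Finset.range (2 * M.M i j),
        (if w = (σ j * σ i) ^ r * σ j then (-1 : ℤˣ) else 1)) * ε = ε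
    have h2 : 2 * M.M i j = M.M i j + M.M i j := by ring
    rw [h2, Finset.prod_range_add]
    have he : ∀ r ∈ Finset.range (M.M i j),
        (if w = (σ j * σ i) ^ (M.M i j + r) * σ j then (-1 : ℤˣ) else 1)
          = (if w = (σ j * σ i) ^ r * σ j then (-1 : ℤˣ) else 1) := by
      intro r _
      rw [pow_add, hq, one_mul]
    rw [Finset.prod_congr rfl he, ← sq, Int.units_sq, one_mul]

/-- The sign permutation representation of `W`. -/
noncomputable def Phi : W →* Equiv.Perm (W × ℤˣ) :=
  cs.lift ⟨fun i => eta cs i, eta_liftable cs⟩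

lemma Phi_simple (i : B) : Phi cs (σ i) = eta cs i :=
  cs.lift_apply_simple (eta_liftable cs) i

/-- The sign of the multiplicity of `t` in the right inversion sequence of `ω`. -/
noncomputable def nu (ω : List B) (t : W) : ℤˣ :=
  ((cs.rightInvSeq ω).map (fun u => if u = t then (-1 : ℤˣ) else 1)).prod

lemma nu_nil (t : W) : nu cs [] t = 1 := rfl

lemma nu_cons (i : B) (ω : List B) (t : W) :
    nu cs (i :: ω) t =
      (if (π ω)⁻¹ * σ i * π ω = t then (-1 : ℤˣ) else 1) * nu cs ω t := by
  simp [nu, rightInvSeq]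

lemma Phi_wordProd (ω : List B) (t : W) (ε : ℤˣ) :
    Phi cs (π ω) (t, ε) = (π ω * t * (π ω)⁻¹, nu cs ω t * ε) := by
  induction ω generalizing ε with
  | nil => simp [nu_nil]
  | cons i ω ih =>
    rw [cs.wordProd_cons, map_mul, Equiv.Perm.mul_apply, ih, Phi_simple, eta_apply]
    refine Prod.ext ?_ ?_
    · show σ i * (π ω * t * (π ω)⁻¹) * σ i = (σ i * π ω) * t * (σ i * π ω)⁻¹
      rw [mul_inv_rev, cs.inv_simple]
      simp only [mul_assoc]
    · show (if π ω * t * (π ω)⁻¹ = σ i then -(nu cs ω t * ε) else nu cs ω t * ε)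
        = nu cs (i :: ω) t * ε
      rw [nu_cons]
      have hcond : (π ω * t * (π ω)⁻¹ = σ i) ↔ ((π ω)⁻¹ * σ i * π ω = t) := by
        constructor
        · intro h; rw [← h]; group
        · intro h; rw [← h]; group
      by_cases h : π ω * t * (π ω)⁻¹ = σ i
      · rw [if_pos h, if_pos (hcond.mp h)]
        simp [mul_assoc]
      · rw [if_neg h, if_neg (fun hh => h (hcond.mpr hh)), one_mul]

lemma nu_eq_of_wordProd_eq {ω ω' : List B} (h : π ω = π ω') (t : W) :
    nu cs ω t = nu cs ω' t := by
  have h1 := Phi_wordProd cs ω t 1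
  have h2 := Phi_wordProd cs ω' t 1
  rw [h] at h1
  rw [h1] at h2
  have := congrArg Prod.snd h2
  simpa using this

lemma mem_ris_of_nu_ne_one {ω : List B} {t : W} (h : nu cs ω t ≠ 1) :
    t ∈ cs.rightInvSeq ω := by
  by_contra hmem
  apply h
  unfold nu
  apply List.prod_eq_one
  intro u hu
  obtain ⟨v, hv, rfl⟩ := List.mem_map.mp hu
  have hne : v ≠ t := fun hc => hmem (hc ▸ hv)
  rw [if_neg hne]

lemma nu_neg_of_rightDescent {w : W} {i : B} (h : ℓ (w * σ i) < ℓ w)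
    {ω : List B} (hw : π ω = w) : nu cs ω (σ i) = -1 := by
  obtain ⟨υ, hred, hprod⟩ := cs.exists_reduced_word' (w * σ i)
  have hconcat : π (υ.concat i) = w := by
    rw [cs.wordProd_concat, ← hprod, mul_assoc, cs.simple_mul_simple_self, mul_one]
  rw [nu_eq_of_wordProd_eq cs (show π ω = π (υ.concat i) by rw [hw, hconcat]) (σ i)]
  unfold nu
  rw [cs.rightInvSeq_concat, List.concat_eq_append, List.map_append, List.prod_append]
  have h1 : ((List.map (MulAut.conj (σ i)) (cs.rightInvSeq υ)).map
      (fun u => if u = σ i then (-1 : ℤˣ) else 1)).prod = 1 := by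
    apply List.prod_eq_one
    intro u hu
    obtain ⟨v', hv', rfl⟩ := List.mem_map.mp hu
    obtain ⟨v'', hv'', rfl⟩ := List.mem_map.mp hv'
    rw [if_neg]
    intro hc
    have hv''eq : v'' = σ i := by
      apply (MulAut.conj (σ i)).injective
      rw [hc]
      simp [MulAut.conj_apply]
    have hinv := cs.isRightInversion_of_mem_rightInvSeq hred hv''
    rw [hv''eq] at hinv
    have hlt := hinv.2
    rw [← hprod, mul_assoc, cs.simple_mul_simple_self, mul_one] at hlt
    exact Nat.lt_asymm h hlt
  rw [h1, one_mul]
  simp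

lemma exchange {w : W} {i : B} (h : ℓ (w * σ i) < ℓ w) {ω : List B}
    (hred : cs.IsReduced ω) (hw : π ω = w) :
    ∃ k, w * σ i = π (ω.eraseIdx k) := by
  have hmem : σ i ∈ cs.rightInvSeq ω :=
    mem_ris_of_nu_ne_one cs (by rw [nu_neg_of_rightDescent cs h hw]; decide)
  obtain ⟨k, hk, hget⟩ := List.mem_iff_getElem.mp hmem
  refine ⟨k, ?_⟩
  have hh := cs.wordProd_mul_getD_rightInvSeq ω k
  rw [List.getD_eq_getElem _ 1 hk, hget, hw] at hh
  exact hh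

lemma key_lemma (i j : B) (v : W) (h1 : ℓ (σ i * v) = ℓ v + 1)
    (h2 : ℓ (v * σ j) = ℓ v + 1) (h3 : ℓ (σ i * v * σ j) = ℓ v) :
    σ i * v * σ j = v := by
  obtain ⟨ωv, hlen', hv⟩ := cs.exists_reduced_word v
  have hlen : ℓ v = ωv.length := by rw [hv]; exact hlen'
  have hured : cs.IsReduced (i :: ωv) := by
    unfold CoxeterSystem.IsReduced
    rw [cs.wordProd_cons, ← hv]
    simp only [List.length_cons, hlen]
    omega
  have hdesc : ℓ ((σ i * v) * σ j) < ℓ (σ i * v) := by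
    rw [show (σ i * v) * σ j = σ i * v * σ j from rfl, h3, h1]
    omega
  obtain ⟨k, hk⟩ := exchange cs hdesc hured (by rw [cs.wordProd_cons, ← hv])
  match k with
  | 0 =>
    rw [List.eraseIdx_cons_zero, ← hv] at hk
    exact hk
  | Nat.succ k =>
    exfalso
    rw [show (i :: ωv).eraseIdx (k + 1) = i :: ωv.eraseIdx k from rfl,
      cs.wordProd_cons] at hk
    have hcanc : v * σ j = π (ωv.eraseIdx k) := by
      apply mul_left_cancel (a := σ i)
      rw [← mul_assoc]
      exact hk
    have hle : ℓ (v * σ j) ≤ (ωv.eraseIdx k).length := by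
      rw [hcanc]; exact cs.length_wordProd_le _
    have := List.length_eraseIdx_le ωv k
    omega

lemma key_lemma' (i j : B) (v : W) (h1 : ℓ (σ i * v) + 1 = ℓ v)
    (h2 : ℓ (v * σ j) + 1 = ℓ v) (h3 : ℓ (σ i * v * σ j) = ℓ v) :
    σ i * v * σ j = v := by
  have hu1 : ℓ (σ i * (σ i * v)) = ℓ (σ i * v) + 1 := by
    rw [← mul_assoc, cs.simple_mul_simple_self, one_mul]
    omega
  have hu2 : ℓ ((σ i * v) * σ j) = ℓ (σ i * v) + 1 := by
    rw [show (σ i * v) * σ j = σ i * v * σ j from rfl, h3]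
    omega
  have hu3 : ℓ (σ i * (σ i * v) * σ j) = ℓ (σ i * v) := by
    rw [← mul_assoc, cs.simple_mul_simple_self, one_mul]
    omega
  have hkey := key_lemma cs i j (σ i * v) hu1 hu2 hu3
  rw [← mul_assoc, cs.simple_mul_simple_self, one_mul] at hkey
  -- hkey : v * σ j = σ i * v
  rw [show σ i * v * σ j = (σ i * v) * σ j from rfl, ← hkey, mul_assoc,
    cs.simple_mul_simple_self, mul_one]


section Ext

open SemidirectProduct

variable {Ω : Type*} [Group Ω] {φ : Ω →* MulAut W}

/-- Extended length, as in the pinned statement file. -/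
noncomputable def extLen' (cs : CoxeterSystem M W) (x : W ⋊[φ] Ω) : ℕ := cs.length x.left

lemma left_inl_mul (a : W) (y : W ⋊[φ] Ω) : ((inl a : W ⋊[φ] Ω) * y).left = a * y.left := by
  simp

lemma left_mul_inl (a : W) (y : W ⋊[φ] Ω) : (y * inl a).left = y.left * φ y.right a := by
  simp

lemma right_inl_mul (a : W) (y : W ⋊[φ] Ω) : ((inl a : W ⋊[φ] Ω) * y).right = y.right := by
  simp

lemma right_mul_inl (a : W) (y : W ⋊[φ] Ω) : (y * inl a).right = y.right := by
  simp

lemma simple_sq_ext (i : B) : (inl (σ i) : W ⋊[φ] Ω) * inl (σ i) = 1 := by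
  rw [← map_mul, cs.simple_mul_simple_self, map_one]

lemma extLen'_inl_mul (i : B) (y : W ⋊[φ] Ω) :
    extLen' cs ((inl (σ i) : W ⋊[φ] Ω) * y) = ℓ (σ i * y.left) := by
  unfold extLen'
  rw [left_inl_mul]

lemma extLen'_mul_inl (hφ : ∀ (τ : Ω) (i : B), ∃ j : B, φ τ (σ i) = σ j)
    (i : B) (y : W ⋊[φ] Ω) :
    ∃ j : B, φ y.right (σ i) = σ j ∧ extLen' cs (y * inl (σ i)) = ℓ (y.left * σ j) := by
  obtain ⟨j, hj⟩ := hφ y.right i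
  exact ⟨j, hj, by unfold extLen'; rw [left_mul_inl, hj]⟩

lemma extLen'_inl_mul_cases (i : B) (y : W ⋊[φ] Ω) :
    extLen' cs ((inl (σ i) : W ⋊[φ] Ω) * y) = extLen' cs y + 1 ∨
      extLen' cs ((inl (σ i) : W ⋊[φ] Ω) * y) + 1 = extLen' cs y := by
  rw [extLen'_inl_mul]
  exact cs.length_simple_mul y.left i

lemma extLen'_mul_inl_cases (hφ : ∀ (τ : Ω) (i : B), ∃ j : B, φ τ (σ i) = σ j)
    (i : B) (y : W ⋊[φ] Ω) :
    extLen' cs (y * inl (σ i)) = extLen' cs y + 1 ∨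
      extLen' cs (y * inl (σ i)) + 1 = extLen' cs y := by
  obtain ⟨j, _, hlen⟩ := extLen'_mul_inl cs hφ i y
  rw [hlen]
  exact cs.length_mul_simple y.left j

lemma key_ext (hφ : ∀ (τ : Ω) (i : B), ∃ j : B, φ τ (σ i) = σ j) (i : B) (y : W ⋊[φ] Ω)
    (h1 : extLen' cs ((inl (σ i) : W ⋊[φ] Ω) * y) = extLen' cs y + 1)
    (h2 : extLen' cs (y * inl (σ i)) = extLen' cs y + 1)
    (h3 : extLen' cs ((inl (σ i) : W ⋊[φ] Ω) * y * inl (σ i)) = extLen' cs y) :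
    (inl (σ i) : W ⋊[φ] Ω) * y * inl (σ i) = y := by
  obtain ⟨j, hj, hlen⟩ := extLen'_mul_inl cs hφ i y
  have hleft : ((inl (σ i) : W ⋊[φ] Ω) * y * inl (σ i)).left = σ i * y.left * σ j := by
    rw [left_mul_inl, left_inl_mul, right_inl_mul, hj]
  have h3' : ℓ (σ i * y.left * σ j) = ℓ y.left := by
    rw [← hleft]; exact h3
  have h1' : ℓ (σ i * y.left) = ℓ y.left + 1 := by
    rw [← extLen'_inl_mul cs i y]; exact h1
  have h2' : ℓ (y.left * σ j) = ℓ y.left + 1 := by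
    rw [← hlen]; exact h2
  have hk := key_lemma cs i j y.left h1' h2' h3'
  ext
  · rw [hleft, hk]
  · rw [right_mul_inl, right_inl_mul]

lemma key_ext' (hφ : ∀ (τ : Ω) (i : B), ∃ j : B, φ τ (σ i) = σ j) (i : B) (y : W ⋊[φ] Ω)
    (h1 : extLen' cs ((inl (σ i) : W ⋊[φ] Ω) * y) + 1 = extLen' cs y)
    (h2 : extLen' cs (y * inl (σ i)) + 1 = extLen' cs y)
    (h3 : extLen' cs ((inl (σ i) : W ⋊[φ] Ω) * y * inl (σ i)) = extLen' cs y) :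
    (inl (σ i) : W ⋊[φ] Ω) * y * inl (σ i) = y := by
  obtain ⟨j, hj, hlen⟩ := extLen'_mul_inl cs hφ i y
  have hleft : ((inl (σ i) : W ⋊[φ] Ω) * y * inl (σ i)).left = σ i * y.left * σ j := by
    rw [left_mul_inl, left_inl_mul, right_inl_mul, hj]
  have h3' : ℓ (σ i * y.left * σ j) = ℓ y.left := by
    rw [← hleft]; exact h3
  have h1' : ℓ (σ i * y.left) + 1 = ℓ y.left := by
    rw [← extLen'_inl_mul cs i y]; exact h1
  have h2' : ℓ (y.left * σ j) + 1 = ℓ y.left := by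
    rw [← hlen]; exact h2
  have hk := key_lemma' cs i j y.left h1' h2' h3'
  ext
  · rw [hleft, hk]
  · rw [right_mul_inl, right_inl_mul]

end Ext


section Hecke

open SemidirectProduct

variable {B W Ω H : Type*} [Group W] [Group Ω] [Ring H] [Algebra ℂ H]
  {M : CoxeterMatrix B} (cs : CoxeterSystem M W) {φ : Ω →* MulAut W}
  (T : Module.Basis (W ⋊[φ] Ω) ℂ H)

lemma repr_mul_left (a z : H) (w : W ⋊[φ] Ω) :
    T.repr (a * z) w = (T.repr z).sum fun y c => c * T.repr (a * T y) w := by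
  conv_lhs => rw [← T.linearCombination_repr z, Finsupp.linearCombination_apply]
  rw [Finsupp.sum, Finset.mul_sum, map_sum, Finset.sum_apply']
  rw [Finsupp.sum]
  refine Finset.sum_congr rfl fun y _ => ?_
  rw [mul_smul_comm, map_smul, Finsupp.smul_apply, smul_eq_mul]

lemma repr_mul_right (a z : H) (w : W ⋊[φ] Ω) :
    T.repr (z * a) w = (T.repr z).sum fun y c => c * T.repr (T y * a) w := by
  conv_lhs => rw [← T.linearCombination_repr z, Finsupp.linearCombination_apply]
  rw [Finsupp.sum, Finset.sum_mul, map_sum, Finset.sum_apply']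
  rw [Finsupp.sum]
  refine Finset.sum_congr rfl fun y _ => ?_
  rw [smul_mul_assoc, map_smul, Finsupp.smul_apply, smul_eq_mul]

variable (q : W ⋊[φ] Ω → ℕ)

/-- coefficient of `T_{sy}` in `T_s z`. -/
lemma coeff_Ts_mul
    (hTleft : ∀ s x : W ⋊[φ] Ω, IsSimpleElt cs s →
      (extLen cs x < extLen cs (s * x) → T s * T x = T (s * x)) ∧
      (extLen cs (s * x) < extLen cs x →
        T s * T x = ((q s : ℂ) - 1) • T x + (q s : ℂ) • T (s * x)))
    (z : H) (L : ℕ) (hsupp : ∀ x : W ⋊[φ] Ω, L < extLen cs x → T.repr z x = 0)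
    (i : B) (y : W ⋊[φ] Ω) (hy : extLen cs y = L)
    (hsy : extLen cs ((inl (cs.simple i) : W ⋊[φ] Ω) * y) = L + 1) :
    T.repr (T (inl (cs.simple i)) * z) ((inl (cs.simple i) : W ⋊[φ] Ω) * y)
      = T.repr z y := by
  set s : W ⋊[φ] Ω := inl (cs.simple i) with hs
  have hsimp : IsSimpleElt cs s := ⟨i, rfl⟩
  rw [repr_mul_left, Finsupp.sum, Finset.sum_eq_single y ?hb ?hn]
  · rw [(hTleft s y hsimp).1 (by omega), T.repr_self, Finsupp.single_apply, if_pos rfl,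
      mul_one]
  case hb =>
    intro b hb hby
    have hbL : extLen cs b ≤ L := by
      by_contra hc
      exact (Finsupp.mem_support_iff.mp hb) (hsupp b (by omega))
    have hcases : extLen cs (s * b) = extLen cs b + 1 ∨
        extLen cs (s * b) + 1 = extLen cs b := extLen'_inl_mul_cases cs i b
    rcases hcases with hup | hdn
    · rw [(hTleft s b hsimp).1 (by omega), T.repr_self, Finsupp.single_apply,
        if_neg (fun hc => hby (mul_left_cancel hc)), mul_zero]
    · rw [(hTleft s b hsimp).2 (by omega), map_add, map_smul, map_smul,
        Finsupp.add_apply, Finsupp.smul_apply, Finsupp.smul_apply, T.repr_self, T.repr_self,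
        Finsupp.single_apply, Finsupp.single_apply,
        if_neg (fun hc : b = s * y => by rw [hc] at hbL; omega),
        if_neg (fun hc => hby (mul_left_cancel hc))]
      simp
  case hn =>
    intro hy'
    rw [Finsupp.notMem_support_iff.mp hy', zero_mul]

/-- coefficient of `T_{vs}` in `z T_s`. -/
lemma coeff_mul_Ts
    (hφ : ∀ (τ : Ω) (i : B), ∃ j : B, φ τ (cs.simple i) = cs.simple j)
    (hTright : ∀ s x : W ⋊[φ] Ω, IsSimpleElt cs s →
      (extLen cs x < extLen cs (x * s) → T x * T s = T (x * s)) ∧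
      (extLen cs (x * s) < extLen cs x →
        T x * T s = ((q s : ℂ) - 1) • T x + (q s : ℂ) • T (x * s)))
    (z : H) (L : ℕ) (hsupp : ∀ x : W ⋊[φ] Ω, L < extLen cs x → T.repr z x = 0)
    (i : B) (v : W ⋊[φ] Ω) (hv : extLen cs v = L)
    (hvs : extLen cs (v * (inl (cs.simple i) : W ⋊[φ] Ω)) = L + 1) :
    T.repr (z * T (inl (cs.simple i))) (v * (inl (cs.simple i) : W ⋊[φ] Ω))
      = T.repr z v := by
  set s : W ⋊[φ] Ω := inl (cs.simple i) with hs
  have hsimp : IsSimpleElt cs s := ⟨i, rfl⟩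
  rw [repr_mul_right, Finsupp.sum, Finset.sum_eq_single v ?hb ?hn]
  · rw [(hTright s v hsimp).1 (by omega), T.repr_self, Finsupp.single_apply, if_pos rfl,
      mul_one]
  case hb =>
    intro b hb hbv
    have hbL : extLen cs b ≤ L := by
      by_contra hc
      exact (Finsupp.mem_support_iff.mp hb) (hsupp b (by omega))
    have hcases : extLen cs (b * s) = extLen cs b + 1 ∨
        extLen cs (b * s) + 1 = extLen cs b := extLen'_mul_inl_cases cs hφ i b
    rcases hcases with hup | hdn
    · rw [(hTright s b hsimp).1 (by omega), T.repr_self, Finsupp.single_apply,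
        if_neg (fun hc => hbv (mul_right_cancel hc)), mul_zero]
    · rw [(hTright s b hsimp).2 (by omega), map_add, map_smul, map_smul,
        Finsupp.add_apply, Finsupp.smul_apply, Finsupp.smul_apply, T.repr_self, T.repr_self,
        Finsupp.single_apply, Finsupp.single_apply,
        if_neg (fun hc : b = v * s => by rw [hc, hvs] at hbL; omega),
        if_neg (fun hc => hbv (mul_right_cancel hc))]
      simp
  case hn =>
    intro hv'
    rw [Finsupp.notMem_support_iff.mp hv', zero_mul]

end Hecke

section Central

open SemidirectProduct

variable {B W Ω H : Type*} [Group W] [Group Ω] [Ring H] [Algebra ℂ H]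
  {M : CoxeterMatrix B} (cs : CoxeterSystem M W) {φ : Ω →* MulAut W}
  (T : Module.Basis (W ⋊[φ] Ω) ℂ H) (q : W ⋊[φ] Ω → ℕ)
  (hφ : ∀ (τ : Ω) (i : B), ∃ j : B, φ τ (cs.simple i) = cs.simple j)
  (hTleft : ∀ s x : W ⋊[φ] Ω, IsSimpleElt cs s →
    (extLen cs x < extLen cs (s * x) → T s * T x = T (s * x)) ∧
    (extLen cs (s * x) < extLen cs x →
      T s * T x = ((q s : ℂ) - 1) • T x + (q s : ℂ) • T (s * x)))
  (hTright : ∀ s x : W ⋊[φ] Ω, IsSimpleElt cs s →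
    (extLen cs x < extLen cs (x * s) → T x * T s = T (x * s)) ∧
    (extLen cs (x * s) < extLen cs x →
      T x * T s = ((q s : ℂ) - 1) • T x + (q s : ℂ) • T (x * s)))
  (z : H) (hzc : ∀ a : H, a * z = z * a)
  (L : ℕ) (hsupp : ∀ x : W ⋊[φ] Ω, L < extLen cs x → T.repr z x = 0)

include hφ hTleft hTright hzc hsupp

/-- If `y` is at the bottom of a direct diamond, its coefficient vanishes. -/
lemma coeff_zero_diamond (i : B) (y : W ⋊[φ] Ω)
    (hy : extLen cs y = L)
    (h1 : extLen cs ((inl (cs.simple i) : W ⋊[φ] Ω) * y) = L + 1)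
    (h2 : extLen cs (y * (inl (cs.simple i) : W ⋊[φ] Ω)) = L + 1)
    (h3 : extLen cs ((inl (cs.simple i) : W ⋊[φ] Ω) * y * inl (cs.simple i)) = L + 2) :
    T.repr z y = 0 := by
  set s : W ⋊[φ] Ω := inl (cs.simple i) with hs
  have hsimp : IsSimpleElt cs s := ⟨i, rfl⟩
  have hss : s * s = 1 := simple_sq_ext cs i
  have hL := coeff_Ts_mul cs T q hTleft z L hsupp i y hy h1
  have hR : T.repr (z * T s) (s * y) = 0 := by
    rw [repr_mul_right, Finsupp.sum]
    apply Finset.sum_eq_zero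
    intro b hb
    have hbL : extLen cs b ≤ L := by
      by_contra hc
      exact (Finsupp.mem_support_iff.mp hb) (hsupp b (by omega))
    have hbs : ¬ b * s = s * y := by
      intro hc
      have hb2 : b = s * y * s := by
        rw [← hc, mul_assoc, hss, mul_one]
      rw [hb2, h3] at hbL
      omega
    have hcases : extLen cs (b * s) = extLen cs b + 1 ∨
        extLen cs (b * s) + 1 = extLen cs b := extLen'_mul_inl_cases cs hφ i b
    rcases hcases with hup | hdn
    · rw [(hTright s b hsimp).1 (by omega), T.repr_self, Finsupp.single_apply,
        if_neg hbs, mul_zero]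
    · rw [(hTright s b hsimp).2 (by omega), map_add, map_smul, map_smul,
        Finsupp.add_apply, Finsupp.smul_apply, Finsupp.smul_apply, T.repr_self, T.repr_self,
        Finsupp.single_apply, Finsupp.single_apply,
        if_neg (fun hc : b = s * y => by rw [hc, h1] at hbL; omega),
        if_neg hbs]
      simp
  rw [hzc (T s), hR] at hL
  exact hL.symm

/-- Lateral conjugation preserves coefficients of a central element. -/
lemma coeff_lateral (i : B) (y : W ⋊[φ] Ω)
    (hy : extLen cs y = L)
    (h3 : extLen cs ((inl (cs.simple i) : W ⋊[φ] Ω) * y * inl (cs.simple i)) = L) :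
    T.repr z ((inl (cs.simple i) : W ⋊[φ] Ω) * y * inl (cs.simple i)) = T.repr z y := by
  set s : W ⋊[φ] Ω := inl (cs.simple i) with hs
  have hss : s * s = 1 := simple_sq_ext cs i
  set y2 : W ⋊[φ] Ω := s * y * s with hy2def
  have hy2s : y2 * s = s * y := by
    rw [hy2def, mul_assoc (s * y), hss, mul_one]
  have hsy2 : s * y2 = y * s := by
    rw [hy2def, ← mul_assoc, ← mul_assoc, hss, one_mul]
  have hAcases : extLen cs (s * y) = extLen cs y + 1 ∨
      extLen cs (s * y) + 1 = extLen cs y := extLen'_inl_mul_cases cs i y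
  rcases hAcases with hA | hnA
  · have hsyL : extLen cs (s * y) = L + 1 := by omega
    have hLeq := coeff_Ts_mul cs T q hTleft z L hsupp i y hy hsyL
    have hy2sL : extLen cs (y2 * s) = L + 1 := by rw [hy2s]; exact hsyL
    have hReq := coeff_mul_Ts cs T q hφ hTright z L hsupp i y2 h3 hy2sL
    rw [hy2s] at hReq
    rw [hzc (T s)] at hLeq
    exact hReq.symm.trans hLeq
  · have hBcases : extLen cs (y * s) = extLen cs y + 1 ∨
        extLen cs (y * s) + 1 = extLen cs y := extLen'_mul_inl_cases cs hφ i y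
    rcases hBcases with hB | hnB
    · have hysL : extLen cs (y * s) = L + 1 := by omega
      have hReq := coeff_mul_Ts cs T q hφ hTright z L hsupp i y hy hysL
      have hsy2L : extLen cs (s * y2) = L + 1 := by rw [hsy2]; exact hysL
      have hLeq := coeff_Ts_mul cs T q hTleft z L hsupp i y2 h3 hsy2L
      rw [hsy2] at hLeq
      rw [hzc (T s)] at hLeq
      exact hLeq.symm.trans hReq
    · have hEE : ∀ u : W ⋊[φ] Ω, extLen' cs u = extLen cs u := fun _ => rfl
      have hkey : (inl (cs.simple i) : W ⋊[φ] Ω) * y * inl (cs.simple i) = y :=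
        key_ext' cs hφ i y (by rw [hEE, hEE, ← hs]; omega) (by rw [hEE, hEE, ← hs]; omega)
          (by rw [hEE, hEE, ← hs, ← hy2def]; omega)
      have hkey2 : y2 = y := hkey
      rw [hkey2]

end Central

end Stmt15Aux

/-- if `z ∈ Z_{L,τ}(𝓗)`, `x ∉ Λ` and `ℓ(x) = L`, then `z_x = 0`. -/
theorem statement15 {B W Ω H : Type*} [Group W] [Group Ω] [Ring H] [Algebra ℂ H]
    {M : CoxeterMatrix B} (cs : CoxeterSystem M W) (φ : Ω →* MulAut W)
    (hφ : ∀ (τ : Ω) (i : B), ∃ j : B, φ τ (cs.simple i) = cs.simple j)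
    (T : Module.Basis (W ⋊[φ] Ω) ℂ H)
    (q : W ⋊[φ] Ω → ℕ)
    (hq : ∀ s t : W ⋊[φ] Ω, IsSimpleElt cs s → IsSimpleElt cs t → IsConj s t → q s = q t)
    (hTleft : ∀ s x : W ⋊[φ] Ω, IsSimpleElt cs s →
      (extLen cs x < extLen cs (s * x) → T s * T x = T (s * x)) ∧
      (extLen cs (s * x) < extLen cs x →
        T s * T x = ((q s : ℂ) - 1) • T x + (q s : ℂ) • T (s * x)))
    (hTright : ∀ s x : W ⋊[φ] Ω, IsSimpleElt cs s →
      (extLen cs x < extLen cs (x * s) → T x * T s = T (x * s)) ∧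
      (extLen cs (x * s) < extLen cs x →
        T x * T s = ((q s : ℂ) - 1) • T x + (q s : ℂ) • T (x * s)))
    (hTom : ∀ (τ : Ω) (x : W ⋊[φ] Ω),
      T (SemidirectProduct.inr τ * x) = T (SemidirectProduct.inr τ) * T x ∧
      T (x * SemidirectProduct.inr τ) = T x * T (SemidirectProduct.inr τ))
    (Λ : Subgroup (W ⋊[φ] Ω)) (hΛ : Λ.Normal)
    (S₀ : Set (W ⋊[φ] Ω)) (hS₀ : ∀ s ∈ S₀, IsSimpleElt cs s)
    (hmeet : Λ ⊓ Subgroup.closure S₀ = ⊥)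
    (hjoin : ∀ x : W ⋊[φ] Ω, ∃ t ∈ Λ, ∃ u ∈ Subgroup.closure S₀, x = t * u)
    (hconstlen : ∀ t ∈ Λ, ∀ u ∈ Subgroup.closure S₀,
      extLen cs (u * t * u⁻¹) = extLen cs t)
    (hdiam : ∀ x : W ⋊[φ] Ω, x ∉ Λ → Diamond cs x)
    (L : ℕ) (τ : Ω) (z : H) (hz : z ∈ Set.center H)
    (hzsupp : ∀ x : W ⋊[φ] Ω, (L < extLen cs x ∨ x.right ≠ τ) → T.repr z x = 0)
    (x : W ⋊[φ] Ω) (hxΛ : x ∉ Λ) (hxL : extLen cs x = L) :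
    T.repr z x = 0 := by
  classical
  have hsupp : ∀ u : W ⋊[φ] Ω, L < extLen cs u → T.repr z u = 0 :=
    fun u h => hzsupp u (Or.inl h)
  have hzc : ∀ a : H, a * z = z * a := fun a => ((Set.mem_center_iff.mp hz).comm a).symm
  have hEE : ∀ u : W ⋊[φ] Ω, Stmt15Aux.extLen' cs u = extLen cs u := fun _ => rfl
  obtain ⟨x', hlat, hdd⟩ := hdiam x hxΛ
  obtain ⟨n, ss, hsimps, hlen, hx'⟩ := hlat
  have chain : ∀ k, k ≤ n → extLen cs (conjSeqW x ss k) = L ∧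
      T.repr z (conjSeqW x ss k) = T.repr z x := by
    intro k
    induction k with
    | zero => intro _; exact ⟨hxL, rfl⟩
    | succ k ih =>
      intro hk
      have hkn : k < n := hk
      obtain ⟨hl, hc⟩ := ih (Nat.le_of_succ_le hk)
      obtain ⟨i, hi⟩ := hsimps k hkn
      have hstep : conjSeqW x ss (k + 1) = ss k * conjSeqW x ss k * ss k := rfl
      have hlen1 : extLen cs (conjSeqW x ss (k + 1)) = L := by
        rw [hlen k hkn]; exact hxL
      refine ⟨hlen1, ?_⟩
      rw [hstep, hi]
      rw [Stmt15Aux.coeff_lateral cs T q hφ hTleft hTright z hzc L hsupp i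
        (conjSeqW x ss k) hl (by rw [← hi, ← hstep]; exact hlen1)]
      exact hc
  obtain ⟨hx'L, hx'c⟩ : extLen cs x' = L ∧ T.repr z x' = T.repr z x := by
    rw [hx']; exact chain n le_rfl
  obtain ⟨s, hssimp, hd1, hd2, hd3⟩ := hdd
  obtain ⟨i, hi⟩ := hssimp
  subst hi
  have hc1 := Stmt15Aux.extLen'_inl_mul_cases cs i x'
  rw [hEE, hEE] at hc1
  have h1 : extLen cs (SemidirectProduct.inl (cs.simple i) * x') = L + 1 := by
    rcases hc1 with h | h <;> omega
  have hc2 := Stmt15Aux.extLen'_mul_inl_cases cs hφ i x'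
  rw [hEE, hEE] at hc2
  have h2 : extLen cs (x' * SemidirectProduct.inl (cs.simple i)) = L + 1 := by
    rcases hc2 with h | h <;> omega
  have hc3 := Stmt15Aux.extLen'_mul_inl_cases cs hφ i
    (SemidirectProduct.inl (cs.simple i) * x')
  rw [hEE, hEE] at hc3
  have h3 : extLen cs (SemidirectProduct.inl (cs.simple i) * x' *
      SemidirectProduct.inl (cs.simple i)) = L + 2 := by
    rcases hc3 with h | h
    · omega
    · exfalso
      apply hd3
      exact Stmt15Aux.key_ext cs hφ i x' (by rw [hEE, hEE]; omega)
        (by rw [hEE, hEE]; omega) (by rw [hEE, hEE]; omega)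
  have hzero := Stmt15Aux.coeff_zero_diamond cs T q hφ hTleft hTright z hzc L hsupp
    i x' hx'L h1 h2 h3
  rw [← hx'c]
  exact hzero
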